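/- Antisymmetry of the graded Poisson bracket: for the bracket {F,G} = ∑_{P,Q} θ^{(P+Q+J)}-graded integral of D^{P+Q}( E^P(f) · Î^{⟨J⟩}(E^Q(g)) ) with Î antisymmetric (Î* = −Î), one has {F,G} = −{G,F} modulo formal divergences. -/

import Mathlib

open MvPolynomial

noncomputable section

/-- The differential polynomial algebra `A = ℝ[u, u', u'', ...]`. -/
abbrev A : Type := MvPolynomial ℕ ℝ

/-- The total derivative on `A`: `D(u^{(k)}) = u^{(k+1)}`. -/
def Dtot : Derivation ℝ A A := MvPolynomial.mkDerivation ℝ (fun k => (X (k+1) : A))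

/-- `D` as a plain function. -/
def D1 : A → A := fun f => Dtot f

/-- The θ-graded coefficient ring `R = A ⊗ ℝ[θ^{(j)}]`,
`θ^{(i)}θ^{(j)} = θ^{(i+j)}`. -/
abbrev R : Type := AddMonoidAlgebra A ℕ

/-- `D` on `R`: `D(θ^{(j)} a) = θ^{(j)} D(a) + θ^{(j+1)} a`. -/
def DR (r : R) : R :=
  AddMonoidAlgebra.ofCoeff
    (Finsupp.sum r.coeff (fun j a => Finsupp.single j (Dtot a) + Finsupp.single (j+1) a))

/-- Higher Eulerian operators
`E^p(f) = ∑_{k≥p} (−1)^{k+p} C(k,p) D^{k−p}(∂f/∂u^{(k)})`. -/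
def hEuler (p : ℕ) (f : A) : A :=
  ∑ᶠ k : ℕ, ((-1 : A) ^ (k + p)) * (k.choose p : A) * D1^[k - p] (pderiv k f)

/-- The coefficients (formula (4.1) of the paper) of the graded adjoint of
the graded operator `Î = ∑_{j,k} θ^{(j)} c_{jk} D^k`:
`(Î*)^{⟨J⟩M} = ∑ (−1)^k C(k,l) C(k−l,M) D^{k−l−M} c_{jk}` over `j + l = J`. -/
def adjCoeff (c : ℕ → ℕ → A) (J M : ℕ) : A :=
  ∑ᶠ j : ℕ, ∑ᶠ l : ℕ, ∑ᶠ k : ℕ,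
    if J = j + l then
      ((-1 : A) ^ k) * (k.choose l : A) * ((k - l).choose M : A)
        * D1^[k - l - M] (c j k)
    else 0

/-- The graded Poisson bracket density of `F = ∫θf` and `G = ∫θg` with respect
to the graded operator with coefficients `c`:
`{F,G} = ∫ ∑_{j,p,q} θ^{(j)} D^{p+q}( E^p(f) · Î^{⟨j⟩}(E^q(g)) )`. -/
def bracketDensity (c : ℕ → ℕ → A) (f g : A) : R :=
  ∑ᶠ j : ℕ, ∑ᶠ p : ℕ, ∑ᶠ q : ℕ,
    AddMonoidAlgebra.single j
      (D1^[p + q] (hEuler p f * ∑ᶠ k : ℕ, c j k * D1^[k] (hEuler q g)))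

namespace GPB

lemma D1_zero : D1 (0:A) = 0 := by simp [D1]
lemma D1_mul (x y : A) : D1 (x * y) = x * D1 y + y * D1 x := by
  simp [D1, Derivation.leibniz, smul_eq_mul]
lemma D1_iter_zero (t : ℕ) : D1^[t] (0:A) = 0 := by
  induction t with
  | zero => rfl
  | succ t ih => rw [Function.iterate_succ_apply, D1_zero, ih]

def DRhom : R →+ R where
  toFun := DR
  map_zero' := by simp [DR]
  map_add' r s := by
    show DR (r + s) = DR r + DR s
    unfold DR
    rw [AddMonoidAlgebra.coeff_add, Finsupp.sum_add_index', AddMonoidAlgebra.ofCoeff_add]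
    · intro j; simp
    · intro j a b; rw [map_add, Finsupp.single_add, Finsupp.single_add]; abel

lemma DRhom_apply (r : R) : DRhom r = DR r := rfl

def Mr : AddSubgroup R := DRhom.range
abbrev Q := R ⧸ Mr
instance instDSQ : DistribSMul ℤ Q := (AddCommGroup.toIntModule Q).toDistribMulAction.toDistribSMul
def π : R →+ Q := QuotientAddGroup.mk' Mr

lemma pi_eq_zero_iff (r : R) : π r = 0 ↔ r ∈ Mr :=
  QuotientAddGroup.eq_zero_iff r

def ps (i : ℕ) : A →+ Q where
  toFun x := π (AddMonoidAlgebra.single i x)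
  map_zero' := by
    show π (AddMonoidAlgebra.single i (0:A)) = 0
    rw [AddMonoidAlgebra.single_zero, map_zero]
  map_add' x y := by
    show π (AddMonoidAlgebra.single i (x + y)) = π (AddMonoidAlgebra.single i x) + π (AddMonoidAlgebra.single i y)
    rw [AddMonoidAlgebra.single_add, map_add]

lemma ps_apply (i : ℕ) (x : A) : ps i x = π (AddMonoidAlgebra.single i x) := rfl

lemma DR_single (n : ℕ) (b : A) :
    DR (AddMonoidAlgebra.single n b) = AddMonoidAlgebra.single n (Dtot b) + AddMonoidAlgebra.single (n+1) b := by
  unfold DR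
  rw [AddMonoidAlgebra.coeff_single, Finsupp.sum_single_index]
  · rfl
  · simp

lemma ps_D (n : ℕ) (b : A) : ps n (D1 b) = - ps (n+1) b := by
  have h : π (AddMonoidAlgebra.single n (Dtot b) + AddMonoidAlgebra.single (n+1) b) = 0 := by
    rw [pi_eq_zero_iff]
    exact ⟨AddMonoidAlgebra.single n b, by rw [DRhom_apply, DR_single]⟩
  rw [map_add] at h
  exact eq_neg_of_add_eq_zero_left h

lemma ps_Dpow (t : ℕ) : ∀ (n : ℕ) (b : A),
    ps n (D1^[t] b) = ((-1:ℤ)^t) • ps (n+t) b := by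
  induction t with
  | zero => intro n b; simp
  | succ t ih =>
    intro n b
    rw [Function.iterate_succ_apply, ih n (D1 b), ps_D, pow_succ]
    simp [mul_neg_one, neg_smul, smul_neg, ← add_assoc]

lemma ps_mul_D (n : ℕ) (x z : A) :
    ps n (x * D1 z) = - ps n (D1 x * z) - ps (n+1) (x * z) := by
  have h : ps n (D1 (x * z)) = - ps (n+1) (x*z) := ps_D n (x*z)
  rw [D1_mul, map_add] at h
  have : ps n (z * D1 x) = ps n (D1 x * z) := by rw [mul_comm]
  rw [this] at h
  rw [eq_sub_of_add_eq h]
  abel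

lemma pascal_sum {M : Type*} [AddCommMonoid M] (T : ℕ → M) (k : ℕ) :
    ∑ l ∈ Finset.range (k+2), (k+1).choose l • T l
      = ∑ l ∈ Finset.range (k+1), k.choose l • T l
        + ∑ l ∈ Finset.range (k+1), k.choose l • T (l+1) := by
  have h1 : ∑ l ∈ Finset.range (k+2), (k+1).choose l • T l
      = (∑ i ∈ Finset.range (k+1),
          ((k.choose i) • T (i+1) + (k.choose (i+1)) • T (i+1))) + T 0 := by
    rw [Finset.sum_range_succ' (fun l => (k+1).choose l • T l) (k+1)]
    simp [Nat.choose_succ_succ, add_nsmul]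
  have h2 : ∑ l ∈ Finset.range (k+1), k.choose l • T l
      = (∑ i ∈ Finset.range k, k.choose (i+1) • T (i+1)) + T 0 := by
    rw [Finset.sum_range_succ' (fun l => k.choose l • T l) k]
    simp
  have h3 : ∑ i ∈ Finset.range (k+1), k.choose (i+1) • T (i+1)
      = ∑ i ∈ Finset.range k, k.choose (i+1) • T (i+1) := by
    rw [Finset.sum_range_succ]
    simp [Nat.choose_succ_self]
  rw [h1, Finset.sum_add_distrib, h2, ← h3]
  abel

lemma D1_sum {s : Finset ℕ} (f : ℕ → A) :
    D1 (∑ i ∈ s, f i) = ∑ i ∈ s, D1 (f i) :=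
  map_sum Dtot.toLinearMap f s

lemma D1_nsmul (m : ℕ) (x : A) : D1 (m • x) = m • D1 x :=
  map_nsmul Dtot.toLinearMap m x

lemma D1_iter_mul (r : ℕ) : ∀ x y : A, D1^[r] (x * y)
    = ∑ m ∈ Finset.range (r+1), (r.choose m) • (D1^[m] x * D1^[r-m] y) := by
  induction r with
  | zero => intro x y; simp
  | succ r ih =>
    intro x y
    rw [Function.iterate_succ_apply', ih x y, D1_sum]
    have step : ∀ m ∈ Finset.range (r+1),
        D1 ((r.choose m) • (D1^[m] x * D1^[r-m] y))
          = r.choose m • (D1^[m] x * D1^[(r+1)-m] y)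
            + r.choose m • (D1^[m+1] x * D1^[(r+1)-(m+1)] y) := by
      intro m hm
      rw [Finset.mem_range] at hm
      rw [D1_nsmul, D1_mul]
      have h1 : D1 (D1^[r-m] y) = D1^[(r+1)-m] y := by
        rw [show (r+1)-m = (r-m)+1 from by omega]
        exact (Function.iterate_succ_apply' D1 (r-m) y).symm
      have h2 : D1^[r-m] y * D1 (D1^[m] x) = D1^[m+1] x * D1^[(r+1)-(m+1)] y := by
        rw [show D1 (D1^[m] x) = D1^[m+1] x from (Function.iterate_succ_apply' D1 m x).symm,
          mul_comm, show (r+1)-(m+1) = r-m from by omega]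
      rw [h1, h2, smul_add]
    rw [Finset.sum_congr rfl step, Finset.sum_add_distrib]
    have hp := pascal_sum (fun m => D1^[m] x * D1^[(r+1)-m] y) r
    beta_reduce at hp
    rw [show r+1+1 = r+2 from rfl, hp]

lemma ps_mul_Dpow (k : ℕ) : ∀ (n : ℕ) (x y : A),
    ps n (x * D1^[k] y)
      = ∑ l ∈ Finset.range (k+1),
          ((-1:ℤ)^k * (k.choose l : ℤ)) • ps (n+l) (D1^[k-l] x * y) := by
  induction k with
  | zero => intro n x y; simp
  | succ k ih =>
    intro n x y
    have hB : ps n (x * D1^[k+1] y)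
        = - ps n (D1 x * D1^[k] y) - ps (n+1) (x * D1^[k] y) := by
      rw [Function.iterate_succ_apply']
      exact ps_mul_D n x (D1^[k] y)
    rw [hB, ih n (D1 x), ih (n+1) x]
    have e1 : ∀ l ∈ Finset.range (k+1),
        ((-1:ℤ)^k * (k.choose l : ℤ)) • ps (n+l) (D1^[k-l] (D1 x) * y)
          = ((-1:ℤ)^k) • ((k.choose l) • ps (n+l) (D1^[(k+1)-l] x * y)) := by
      intro l hl; rw [Finset.mem_range] at hl
      have h : D1^[k-l] (D1 x) = D1^[(k+1)-l] x := by
        rw [← Function.iterate_succ_apply]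
        congr 1; omega
      rw [h]; module
    have e2 : ∀ l ∈ Finset.range (k+1),
        ((-1:ℤ)^k * (k.choose l : ℤ)) • ps (n+1+l) (D1^[k-l] x * y)
          = ((-1:ℤ)^k) • ((k.choose l) • ps (n+(l+1)) (D1^[(k+1)-(l+1)] x * y)) := by
      intro l hl
      rw [show n+1+l = n+(l+1) from by omega, show k-l = (k+1)-(l+1) from by omega]
      module
    rw [Finset.sum_congr rfl e1, Finset.sum_congr rfl e2, ← Finset.smul_sum, ← Finset.smul_sum]
    have e3 : ∀ l ∈ Finset.range (k+1+1),
        ((-1:ℤ)^(k+1) * ((k+1).choose l : ℤ)) • ps (n+l) (D1^[(k+1)-l] x * y)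
          = ((-1:ℤ)^(k+1)) • (((k+1).choose l) • ps (n+l) (D1^[(k+1)-l] x * y)) := by
      intro l _; module
    rw [Finset.sum_congr rfl e3, ← Finset.smul_sum]
    have hp := pascal_sum (fun l => ps (n+l) (D1^[(k+1)-l] x * y)) k
    beta_reduce at hp
    rw [show k+1+1 = k+2 from rfl, hp, pow_succ]
    module

lemma finsum_range {M : Type*} [AddCommMonoid M] (f : ℕ → M) (N : ℕ)
    (h : ∀ n, N ≤ n → f n = 0) :
    ∑ᶠ n, f n = ∑ n ∈ Finset.range N, f n := by
  apply finsum_eq_sum_of_support_subset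
  intro x hx
  simp only [Function.mem_support] at hx
  simp only [Finset.coe_range, Set.mem_Iio]
  by_contra hc
  exact hx (h x (le_of_not_gt hc))

lemma finsum3_range {M : Type*} [AddCommMonoid M] (F : ℕ → ℕ → ℕ → M) (N : ℕ)
    (h : ∀ j l k, N ≤ j ∨ N ≤ l ∨ N ≤ k → F j l k = 0) :
    (∑ᶠ j : ℕ, ∑ᶠ l : ℕ, ∑ᶠ k : ℕ, F j l k)
      = ∑ j ∈ Finset.range N, ∑ l ∈ Finset.range N, ∑ k ∈ Finset.range N, F j l k := by
  have hk : ∀ j l, ∑ᶠ k : ℕ, F j l k = ∑ k ∈ Finset.range N, F j l k :=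
    fun j l => finsum_range _ N (fun k hk => h j l k (Or.inr (Or.inr hk)))
  have hl : ∀ j, (∑ᶠ l : ℕ, ∑ k ∈ Finset.range N, F j l k)
      = ∑ l ∈ Finset.range N, ∑ k ∈ Finset.range N, F j l k :=
    fun j => finsum_range _ N
      (fun l hl => Finset.sum_eq_zero (fun k _ => h j l k (Or.inr (Or.inl hl))))
  calc (∑ᶠ j : ℕ, ∑ᶠ l : ℕ, ∑ᶠ k : ℕ, F j l k)
      = ∑ᶠ j : ℕ, ∑ l ∈ Finset.range N, ∑ k ∈ Finset.range N, F j l k := by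
        apply finsum_congr; intro j
        rw [← hl j]
        apply finsum_congr; intro l
        exact hk j l
    _ = ∑ j ∈ Finset.range N, ∑ l ∈ Finset.range N, ∑ k ∈ Finset.range N, F j l k :=
        finsum_range _ N (fun j hj => Finset.sum_eq_zero fun l _ =>
          Finset.sum_eq_zero fun k _ => h j l k (Or.inl hj))

lemma exists_pderiv_bound (f : A) : ∃ B : ℕ, ∀ k, B ≤ k → pderiv k f = 0 := by
  refine ⟨f.vars.sup id + 1, fun k hk => ?_⟩
  apply pderiv_eq_zero_of_notMem_vars
  intro hmem
  have := Finset.le_sup (f := id) hmem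
  simp only [id] at this
  omega

lemma hEuler_eq_zero {p : ℕ} {f : A} (h : ∀ k, p ≤ k → pderiv k f = 0) :
    hEuler p f = 0 := by
  unfold hEuler
  apply finsum_eq_zero_of_forall_eq_zero
  intro k
  rcases le_or_gt p k with hk | hk
  · rw [h k hk]
    simp [D1_iter_zero]
  · rw [Nat.choose_eq_zero_of_lt hk]
    simp

lemma adjCoeff_eq (c : ℕ → ℕ → A) (N : ℕ) (hcN : ∀ j k, N ≤ j ∨ N ≤ k → c j k = 0)
    (J m : ℕ) :
    adjCoeff c J m
      = ∑ j ∈ Finset.range N, ∑ l ∈ Finset.range N, ∑ k ∈ Finset.range N,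
          (if J = j + l then
            ((-1 : A) ^ k) * (k.choose l : A) * ((k - l).choose m : A)
              * D1^[k - l - m] (c j k) else 0) := by
  unfold adjCoeff
  apply finsum3_range
  intro j l k h
  rcases h with hj | hl | hk
  · rw [hcN j k (Or.inl hj), D1_iter_zero, mul_zero, ite_self]
  · rcases le_or_gt N k with hk | hk
    · rw [hcN j k (Or.inr hk), D1_iter_zero, mul_zero, ite_self]
    · rw [Nat.choose_eq_zero_of_lt (show k < l by omega)]
      simp
  · rw [hcN j k (Or.inr hk), D1_iter_zero, mul_zero, ite_self]

lemma bracketDensity_eq (c : ℕ → ℕ → A) (f g : A) (N : ℕ)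
    (hcN : ∀ j k, N ≤ j ∨ N ≤ k → c j k = 0)
    (hf : ∀ p, N ≤ p → hEuler p f = 0) (hg : ∀ q, N ≤ q → hEuler q g = 0) :
    bracketDensity c f g
      = ∑ j ∈ Finset.range N, ∑ p ∈ Finset.range N, ∑ q ∈ Finset.range N,
          AddMonoidAlgebra.single j
            (D1^[p + q] (hEuler p f *
              ∑ k ∈ Finset.range N, c j k * D1^[k] (hEuler q g))) := by
  unfold bracketDensity
  rw [finsum3_range _ N ?_]
  · apply Finset.sum_congr rfl; intro j _
    apply Finset.sum_congr rfl; intro p _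
    apply Finset.sum_congr rfl; intro q _
    rw [finsum_range (fun k => c j k * D1^[k] (hEuler q g)) N
      (fun k hk => by show c j k * _ = 0; rw [hcN j k (Or.inr hk), zero_mul])]
  · intro j p q h
    rcases h with hj | hp | hq
    · have h0 : (fun k => c j k * D1^[k] (hEuler q g)) = fun _ => (0:A) :=
        funext fun k => by rw [hcN j k (Or.inl hj), zero_mul]
      rw [h0, finsum_zero, mul_zero, D1_iter_zero, AddMonoidAlgebra.single_zero]
    · rw [hf p hp, zero_mul, D1_iter_zero, AddMonoidAlgebra.single_zero]
    · have h0 : (fun k => c j k * D1^[k] (hEuler q g)) = fun _ => (0:A) :=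
        funext fun k => by rw [hg q hq, D1_iter_zero, mul_zero]
      rw [h0, finsum_zero, mul_zero, D1_iter_zero, AddMonoidAlgebra.single_zero]

lemma sum_perm5 {M : Type*} [AddCommMonoid M] (s1 s2 s3 s4 s5 : Finset ℕ)
    (G : ℕ → ℕ → ℕ → ℕ → ℕ → M) :
    (∑ j ∈ s1, ∑ k ∈ s2, ∑ l ∈ s3, ∑ m ∈ s4, ∑ J ∈ s5, G j k l m J)
      = ∑ J ∈ s5, ∑ m ∈ s4, ∑ j ∈ s1, ∑ l ∈ s3, ∑ k ∈ s2, G j k l m J := by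
  calc (∑ j ∈ s1, ∑ k ∈ s2, ∑ l ∈ s3, ∑ m ∈ s4, ∑ J ∈ s5, G j k l m J)
      = ∑ j ∈ s1, ∑ k ∈ s2, ∑ l ∈ s3, ∑ J ∈ s5, ∑ m ∈ s4, G j k l m J :=
        Finset.sum_congr rfl fun j _ => Finset.sum_congr rfl fun k _ =>
          Finset.sum_congr rfl fun l _ => Finset.sum_comm
    _ = ∑ j ∈ s1, ∑ k ∈ s2, ∑ J ∈ s5, ∑ l ∈ s3, ∑ m ∈ s4, G j k l m J :=
        Finset.sum_congr rfl fun j _ => Finset.sum_congr rfl fun k _ => Finset.sum_comm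
    _ = ∑ j ∈ s1, ∑ J ∈ s5, ∑ k ∈ s2, ∑ l ∈ s3, ∑ m ∈ s4, G j k l m J :=
        Finset.sum_congr rfl fun j _ => Finset.sum_comm
    _ = ∑ J ∈ s5, ∑ j ∈ s1, ∑ k ∈ s2, ∑ l ∈ s3, ∑ m ∈ s4, G j k l m J :=
        Finset.sum_comm
    _ = ∑ J ∈ s5, ∑ j ∈ s1, ∑ k ∈ s2, ∑ m ∈ s4, ∑ l ∈ s3, G j k l m J :=
        Finset.sum_congr rfl fun J _ => Finset.sum_congr rfl fun j _ =>
          Finset.sum_congr rfl fun k _ => Finset.sum_comm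
    _ = ∑ J ∈ s5, ∑ j ∈ s1, ∑ m ∈ s4, ∑ k ∈ s2, ∑ l ∈ s3, G j k l m J :=
        Finset.sum_congr rfl fun J _ => Finset.sum_congr rfl fun j _ => Finset.sum_comm
    _ = ∑ J ∈ s5, ∑ m ∈ s4, ∑ j ∈ s1, ∑ k ∈ s2, ∑ l ∈ s3, G j k l m J :=
        Finset.sum_congr rfl fun J _ => Finset.sum_comm
    _ = ∑ J ∈ s5, ∑ m ∈ s4, ∑ j ∈ s1, ∑ l ∈ s3, ∑ k ∈ s2, G j k l m J :=
        Finset.sum_congr rfl fun J _ => Finset.sum_congr rfl fun m _ =>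
          Finset.sum_congr rfl fun j _ => Finset.sum_comm

lemma key (c : ℕ → ℕ → A) (N : ℕ) (hcN : ∀ j k, N ≤ j ∨ N ≤ k → c j k = 0)
    (hanti : ∀ J M : ℕ, adjCoeff c J M = - c J M) (a b : A) (n : ℕ) :
    (∑ j ∈ Finset.range N, ps (j+n) (b * ∑ k ∈ Finset.range N, c j k * D1^[k] a))
      = - ∑ j ∈ Finset.range N, ps (j+n)
          (a * ∑ k ∈ Finset.range N, c j k * D1^[k] b) := by
  set s := Finset.range N with hs
  set s2 := Finset.range (N+N) with hs2
  -- the A-side building blocks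
  set X : ℕ → A := fun m => a * D1^[m] b with hX
  have hVdef : True := trivial
  -- Step 1-3: expand the left-hand side
  have step1 : ∀ j, ps (j+n) (b * ∑ k ∈ s, c j k * D1^[k] a)
      = ∑ k ∈ s, ps (j+n) ((b * c j k) * D1^[k] a) := by
    intro j
    rw [Finset.mul_sum, map_sum]
    refine Finset.sum_congr rfl fun k _ => ?_
    congr 1
    ring
  have step2 : ∀ j, ∀ k ∈ s, ps (j+n) ((b * c j k) * D1^[k] a)
      = ∑ l ∈ s, ((-1:ℤ)^k * (k.choose l : ℤ)) •
          ps ((j+n)+l) (D1^[k-l] (b * c j k) * a) := by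
    intro j k hk
    rw [ps_mul_Dpow]
    apply Finset.sum_subset
    · intro l hl
      simp only [Finset.mem_range] at hl
      simp only [hs, Finset.mem_range] at hk ⊢
      omega
    · intro l _ hnl
      simp only [Finset.mem_range] at hnl
      rw [Nat.choose_eq_zero_of_lt (show k < l by omega)]
      simp
  have step3 : ∀ j, ∀ k ∈ s, ∀ l ∈ s,
      ((-1:ℤ)^k * (k.choose l : ℤ)) • ps ((j+n)+l) (D1^[k-l] (b * c j k) * a)
        = ∑ m ∈ s, ((-1:ℤ)^k * (k.choose l : ℤ) * ((k-l).choose m : ℤ)) •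
            ps ((j+n)+l) ((D1^[m] b * D1^[(k-l)-m] (c j k)) * a) := by
    intro j k hk l _
    rw [D1_iter_mul, Finset.sum_mul, map_sum, Finset.smul_sum]
    have hsub : Finset.range ((k-l)+1) ⊆ s := by
      intro m hm
      rw [Finset.mem_range] at hm
      rw [hs, Finset.mem_range] at hk ⊢
      omega
    rw [Finset.sum_subset hsub ?_]
    · refine Finset.sum_congr rfl fun m _ => ?_
      rw [smul_mul_assoc, map_nsmul]
      module
    · intro m _ hnm
      simp only [Finset.mem_range] at hnm
      rw [Nat.choose_eq_zero_of_lt (show k - l < m by omega)]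
      simp
  -- Step 4: insert the J summation
  have step4 : ∀ j ∈ s, ∀ k, ∀ l ∈ s, ∀ m,
      ((-1:ℤ)^k * (k.choose l : ℤ) * ((k-l).choose m : ℤ)) •
          ps ((j+n)+l) ((D1^[m] b * D1^[(k-l)-m] (c j k)) * a)
        = ∑ J ∈ s2, (if J = j + l then
            ps (J+n) ((((-1 : A) ^ k) * (k.choose l : A) * ((k - l).choose m : A)
              * D1^[k - l - m] (c j k)) * (a * D1^[m] b)) else 0) := by
    intro j hj k l hl m
    rw [Finset.sum_ite_eq' s2 (j+l)
      (fun J => ps (J+n) ((((-1 : A) ^ k) * (k.choose l : A) * ((k - l).choose m : A)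
        * D1^[k - l - m] (c j k)) * (a * D1^[m] b)))]
    rw [hs, Finset.mem_range] at hj hl
    rw [if_pos (by rw [hs2, Finset.mem_range]; omega)]
    have h2 : (((-1 : A) ^ k) * (k.choose l : A) * ((k - l).choose m : A)
          * D1^[k - l - m] (c j k)) * (a * D1^[m] b)
        = ((-1:ℤ)^k * (k.choose l : ℤ) * ((k-l).choose m : ℤ)) •
            ((D1^[m] b * D1^[(k-l)-m] (c j k)) * a) := by
      rw [zsmul_eq_mul]
      push_cast
      ring
    rw [h2, map_zsmul, show (j+n)+l = (j+l)+n from by omega]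
  -- Step 6: recombine into adjoint coefficients
  have step6 : ∀ J m, ps (J+n) (adjCoeff c J m * X m)
      = ∑ j ∈ s, ∑ l ∈ s, ∑ k ∈ s, (if J = j + l then
          ps (J+n) ((((-1 : A) ^ k) * (k.choose l : A) * ((k - l).choose m : A)
            * D1^[k - l - m] (c j k)) * (a * D1^[m] b)) else 0) := by
    intro J m
    rw [adjCoeff_eq c N hcN J m, Finset.sum_mul, map_sum]
    refine Finset.sum_congr rfl fun j _ => ?_
    rw [Finset.sum_mul, map_sum]
    refine Finset.sum_congr rfl fun l _ => ?_
    rw [Finset.sum_mul, map_sum]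
    refine Finset.sum_congr rfl fun k _ => ?_
    rw [ite_mul, zero_mul, apply_ite (ps (J+n)), map_zero, hX]
  -- put everything together
  calc (∑ j ∈ s, ps (j+n) (b * ∑ k ∈ s, c j k * D1^[k] a))
      = ∑ j ∈ s, ∑ k ∈ s, ∑ l ∈ s, ∑ m ∈ s, ∑ J ∈ s2,
          (if J = j + l then
            ps (J+n) ((((-1 : A) ^ k) * (k.choose l : A) * ((k - l).choose m : A)
              * D1^[k - l - m] (c j k)) * (a * D1^[m] b)) else 0) := by
        refine Finset.sum_congr rfl fun j hj => ?_
        rw [step1 j]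
        refine Finset.sum_congr rfl fun k hk => ?_
        rw [step2 j k hk]
        refine Finset.sum_congr rfl fun l hl => ?_
        rw [step3 j k hk l hl]
        refine Finset.sum_congr rfl fun m hm => ?_
        exact step4 j hj k l hl m
    _ = ∑ J ∈ s2, ∑ m ∈ s, ∑ j ∈ s, ∑ l ∈ s, ∑ k ∈ s,
          (if J = j + l then
            ps (J+n) ((((-1 : A) ^ k) * (k.choose l : A) * ((k - l).choose m : A)
              * D1^[k - l - m] (c j k)) * (a * D1^[m] b)) else 0) :=
        sum_perm5 s s s s s2 _
    _ = ∑ J ∈ s2, ∑ m ∈ s, ps (J+n) (adjCoeff c J m * X m) := by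
        refine Finset.sum_congr rfl fun J _ => Finset.sum_congr rfl fun m _ => ?_
        rw [step6 J m]
    _ = ∑ J ∈ s2, ∑ m ∈ s, - ps (J+n) (c J m * X m) := by
        refine Finset.sum_congr rfl fun J _ => Finset.sum_congr rfl fun m _ => ?_
        rw [hanti J m, neg_mul, map_neg]
    _ = - ∑ J ∈ s2, ∑ m ∈ s, ps (J+n) (c J m * X m) := by
        simp only [Finset.sum_neg_distrib]
    _ = - ∑ J ∈ s, ∑ m ∈ s, ps (J+n) (c J m * X m) := by
        congr 1
        refine (Finset.sum_subset ?_ ?_).symm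
        · rw [hs, hs2]
          exact Finset.range_subset_range.2 (by omega)
        · intro J _ hJ
          rw [hs, Finset.mem_range] at hJ
          apply Finset.sum_eq_zero
          intro m _
          rw [hcN J m (Or.inl (by omega)), zero_mul, map_zero]
    _ = - ∑ j ∈ s, ps (j+n) (a * ∑ k ∈ s, c j k * D1^[k] b) := by
        congr 1
        refine Finset.sum_congr rfl fun j _ => ?_
        rw [Finset.mul_sum, map_sum]
        refine Finset.sum_congr rfl fun k _ => ?_
        rw [hX]
        congr 1
        ring

lemma hpi (c : ℕ → ℕ → A) (N : ℕ) (u v : ℕ → A) :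
    π (∑ j ∈ Finset.range N, ∑ p ∈ Finset.range N, ∑ q ∈ Finset.range N,
        AddMonoidAlgebra.single j
          (D1^[p + q] (u p * ∑ k ∈ Finset.range N, c j k * D1^[k] (v q))))
      = ∑ p ∈ Finset.range N, ∑ q ∈ Finset.range N, ((-1:ℤ)^(p+q)) •
          ∑ j ∈ Finset.range N,
            ps (j+(p+q)) (u p * ∑ k ∈ Finset.range N, c j k * D1^[k] (v q)) := by
  calc π (∑ j ∈ Finset.range N, ∑ p ∈ Finset.range N, ∑ q ∈ Finset.range N,
        AddMonoidAlgebra.single j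
          (D1^[p + q] (u p * ∑ k ∈ Finset.range N, c j k * D1^[k] (v q))))
      = ∑ j ∈ Finset.range N, ∑ p ∈ Finset.range N, ∑ q ∈ Finset.range N,
          ((-1:ℤ)^(p+q)) •
            ps (j+(p+q)) (u p * ∑ k ∈ Finset.range N, c j k * D1^[k] (v q)) := by
        rw [map_sum]
        refine Finset.sum_congr rfl fun j _ => ?_
        rw [map_sum]
        refine Finset.sum_congr rfl fun p _ => ?_
        rw [map_sum]
        refine Finset.sum_congr rfl fun q _ => ?_
        exact ps_Dpow (p+q) j _
    _ = ∑ p ∈ Finset.range N, ∑ j ∈ Finset.range N, ∑ q ∈ Finset.range N,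
          ((-1:ℤ)^(p+q)) •
            ps (j+(p+q)) (u p * ∑ k ∈ Finset.range N, c j k * D1^[k] (v q)) :=
        Finset.sum_comm
    _ = ∑ p ∈ Finset.range N, ∑ q ∈ Finset.range N, ∑ j ∈ Finset.range N,
          ((-1:ℤ)^(p+q)) •
            ps (j+(p+q)) (u p * ∑ k ∈ Finset.range N, c j k * D1^[k] (v q)) :=
        Finset.sum_congr rfl fun p _ => Finset.sum_comm
    _ = ∑ p ∈ Finset.range N, ∑ q ∈ Finset.range N, ((-1:ℤ)^(p+q)) •
          ∑ j ∈ Finset.range N,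
            ps (j+(p+q)) (u p * ∑ k ∈ Finset.range N, c j k * D1^[k] (v q)) := by
        refine Finset.sum_congr rfl fun p _ => Finset.sum_congr rfl fun q _ => ?_
        rw [Finset.smul_sum]

theorem main (c : ℕ → ℕ → A)
    (hfin : {p : ℕ × ℕ | c p.1 p.2 ≠ 0}.Finite)
    (hanti : ∀ J M : ℕ, adjCoeff c J M = - c J M) :
    ∀ f g : A, bracketDensity c f g + bracketDensity c g f ∈ Set.range DR := by
  intro f g
  classical
  obtain ⟨Bf, hBf⟩ := exists_pderiv_bound f
  obtain ⟨Bg, hBg⟩ := exists_pderiv_bound g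
  set N : ℕ := (hfin.toFinset.sup fun p => max p.1 p.2) + 1 + Bf + Bg with hN
  have hcN : ∀ j k, N ≤ j ∨ N ≤ k → c j k = 0 := by
    intro j k h
    by_contra hc
    have hmem : (j,k) ∈ hfin.toFinset := by
      rw [Set.Finite.mem_toFinset]
      exact hc
    have hle := Finset.le_sup (f := fun p : ℕ × ℕ => max p.1 p.2) hmem
    simp only [max_le_iff] at hle
    omega
  have hf : ∀ p, N ≤ p → hEuler p f = 0 := fun p hp =>
    hEuler_eq_zero (fun k hk => hBf k (by omega))
  have hg : ∀ p, N ≤ p → hEuler p g = 0 := fun p hp =>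
    hEuler_eq_zero (fun k hk => hBg k (by omega))
  suffices h : π (bracketDensity c f g + bracketDensity c g f) = 0 by
    rw [pi_eq_zero_iff] at h
    obtain ⟨r, hr⟩ := h
    exact ⟨r, hr⟩
  rw [map_add, bracketDensity_eq c f g N hcN hf hg, bracketDensity_eq c g f N hcN hg hf]
  have h1 := hpi c N (fun p => hEuler p f) (fun q => hEuler q g)
  have h2 := hpi c N (fun p => hEuler p g) (fun q => hEuler q f)
  beta_reduce at h1 h2
  rw [h1, h2]
  have hswap : (∑ p ∈ Finset.range N, ∑ q ∈ Finset.range N, ((-1:ℤ)^(p+q)) •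
          ∑ j ∈ Finset.range N,
            ps (j+(p+q)) (hEuler p g * ∑ k ∈ Finset.range N, c j k * D1^[k] (hEuler q f)))
      = ∑ p ∈ Finset.range N, ∑ q ∈ Finset.range N, ((-1:ℤ)^(q+p)) •
          ∑ j ∈ Finset.range N,
            ps (j+(q+p)) (hEuler q g * ∑ k ∈ Finset.range N, c j k * D1^[k] (hEuler p f)) :=
    Finset.sum_comm
  rw [hswap, ← Finset.sum_add_distrib]
  apply Finset.sum_eq_zero
  intro p _
  rw [← Finset.sum_add_distrib]
  apply Finset.sum_eq_zero
  intro q _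
  rw [Nat.add_comm q p, key c N hcN hanti (hEuler p f) (hEuler q g) (p+q)]
  module

end GPB

/-- antisymmetry of the graded Poisson bracket: if the graded
operator `Î` is antisymmetric (`Î* = −Î`), then `{F,G} = −{G,F}` modulo
formal divergences, i.e., the density of `{F,G} + {G,F}` lies in the image
of `D` on the θ-graded algebra. -/
theorem graded_poisson_bracket_antisymmetric (c : ℕ → ℕ → A)
    (hfin : {p : ℕ × ℕ | c p.1 p.2 ≠ 0}.Finite)
    (hanti : ∀ J M : ℕ, adjCoeff c J M = - c J M) :
    ∀ f g : A, bracketDensity c f g + bracketDensity c g f ∈ Set.range DR :=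
  GPB.main c hfin hanti

end
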